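/- Let E : M_p ⊗ M_n → M_n be the partial trace over the first factor and let ρ = τ ⊗ σ with τ ∈ M_p hermitian and σ ∈ M_n. Then the symmetric bloom satisfies ψ_S(ρ, E) = τ ⊗ ψ_S(σ, id), where ψ_S(ρ, E) = ½{ρ ⊗ 1, J[E]} is the Jordan product of ρ ⊗ 1 with the channel state J[E]. -/

import Mathlib

open Matrix Kronecker BigOperators

/-- For the partial trace channel `E : M_p ⊗ M_n → M_n` (with channel state
`J[E] = ∑_{i,j} (1_p ⊗ E_{ij}^{(n)}) ⊗ E_{ji}^{(n)}`) and `ρ = τ ⊗ σ` with `τ`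
hermitian, the symmetric bloom `ψ_S(ρ, E) = ½{ρ ⊗ 1, J[E]}` equals
`τ ⊗ ψ_S(σ, id)` (up to the associativity reindexing of the tensor factors), where
`ψ_S(σ, id) = ½{σ ⊗ 1, J[id]}` and `J[id] = ∑_{i,j} E_{ij} ⊗ E_{ji}`. -/
theorem symmetric_bloom_partial_trace (p n : ℕ)
    (τ : Matrix (Fin p) (Fin p) ℂ) (hτ : τ.IsHermitian)
    (σ : Matrix (Fin n) (Fin n) ℂ)
    (J : Matrix ((Fin p × Fin n) × Fin n) ((Fin p × Fin n) × Fin n) ℂ)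
    (hJ : J = ∑ i : Fin n, ∑ j : Fin n,
      ((1 : Matrix (Fin p) (Fin p) ℂ) ⊗ₖ Matrix.single i j (1 : ℂ))
        ⊗ₖ Matrix.single j i (1 : ℂ))
    (Jid : Matrix (Fin n × Fin n) (Fin n × Fin n) ℂ)
    (hJid : Jid = ∑ i : Fin n, ∑ j : Fin n,
      Matrix.single i j (1 : ℂ) ⊗ₖ Matrix.single j i (1 : ℂ)) :
    (1 / 2 : ℂ) • (((τ ⊗ₖ σ) ⊗ₖ (1 : Matrix (Fin n) (Fin n) ℂ)) * J
        + J * ((τ ⊗ₖ σ) ⊗ₖ (1 : Matrix (Fin n) (Fin n) ℂ)))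
    = Matrix.reindex (Equiv.prodAssoc (Fin p) (Fin n) (Fin n)).symm
        (Equiv.prodAssoc (Fin p) (Fin n) (Fin n)).symm
        (τ ⊗ₖ ((1 / 2 : ℂ) • ((σ ⊗ₖ (1 : Matrix (Fin n) (Fin n) ℂ)) * Jid
          + Jid * (σ ⊗ₖ (1 : Matrix (Fin n) (Fin n) ℂ))))) := by
  subst hJ hJid
  ext ⟨⟨a,b⟩,c⟩ ⟨⟨a',b'⟩,c'⟩
  simp only [Matrix.smul_apply, Matrix.add_apply, Matrix.mul_apply, Matrix.sum_apply,
    kroneckerMap_apply, Matrix.single, Matrix.one_apply, Matrix.of_apply,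
    Matrix.reindex_apply, Matrix.submatrix_apply, Equiv.prodAssoc, Equiv.symm,
    Equiv.coe_fn_mk, Fintype.sum_prod_type, Finset.mul_sum, Finset.sum_mul]
  simp [ite_and, Finset.sum_ite_eq, Finset.sum_ite_eq', mul_comm]

  split_ifs <;> ring
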